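/- arXiv:1808.02292 — 3 statements merged into one kernel-verified Lean document; each statement's English description precedes it below -/
import Mathlib

section
/- Let G be a compact topological group acting isometrically on metric spaces (P',d') and (P,d), and let φ : P' → P be an ε-G-equivariant Hausdorff approximation. Suppose there exists a section s' : P'/G → P' of the quotient map π' : P' → P'/G. Then the map φ̄ : P'/G → P/G defined by φ̄(x) := π(φ(s'(x))) is a 2ε-isometry between the quotient metric spaces (P'/G, d̄') and (P/G, d̄). -/
lemma inf_attained_aux {G X : Type*} [Group G] [TopologicalSpace G] [CompactSpace G]
    [MetricSpace X] [MulAction G X] [ContinuousSMul G X] (u v : X) :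
    ∃ g₀ : G, (⨅ g : G, dist u (g • v)) = dist u (g₀ • v) := by
  have hc : Continuous fun g : G => dist u (g • v) :=
    (continuous_const.dist (continuous_id.smul continuous_const))
  obtain ⟨g₀, -, hg₀⟩ := IsCompact.exists_isMinOn isCompact_univ
    (Set.univ_nonempty) hc.continuousOn
  refine ⟨g₀, le_antisymm (ciInf_le ⟨0, fun y ⟨g, hg⟩ => hg ▸ dist_nonneg⟩ g₀)
    (le_ciInf fun g => hg₀ (Set.mem_univ g))⟩

lemma inf_le_aux {G X : Type*} [Group G] [MetricSpace X] [MulAction G X] (u v : X) (g : G) :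
    (⨅ g : G, dist u (g • v)) ≤ dist u (g • v) :=
  ciInf_le ⟨0, fun y ⟨g, hg⟩ => hg ▸ dist_nonneg⟩ g

/-- Let a compact topological group `G` act isometrically on metric spaces
`(P', d')` and `(P, d)`, and let `φ : P' → P` be an `ε`-`G`-equivariant Hausdorff approximation.
Suppose `s' : P'/G → P'` is a section of the quotient map.  Then the induced map
`φ̄ : P'/G → P/G`, `φ̄(x) = π(φ(s'(x)))`, is a `2ε`-isometry between the quotient metric spaces:
its metric distortion is `< 2ε` and every point of `P/G` lies within `2ε` of its image.
(The quotient metrics are `d̄(ū₀, ū₁) = inf_{g} d(u₀, g • u₁)`.) -/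
theorem induced_map_on_quotients_is_two_eps_isometry
    {G P' P : Type*} [Group G] [TopologicalSpace G] [CompactSpace G] [IsTopologicalGroup G]
    [MetricSpace P'] [MetricSpace P] [MulAction G P'] [MulAction G P]
    [ContinuousSMul G P'] [ContinuousSMul G P]
    (hiso' : ∀ (g : G) (u v : P'), dist (g • u) (g • v) = dist u v)
    (hiso : ∀ (g : G) (u v : P), dist (g • u) (g • v) = dist u v)
    (ε : ℝ) (hε : 0 < ε) (φ : P' → P)
    (hφ1 : ∀ u₀ u₁ : P', |dist u₀ u₁ - dist (φ u₀) (φ u₁)| < ε)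
    (hφ2 : ∀ v : P, ∃ u' : P', dist v (φ u') < ε)
    (hφG : ∀ (u' : P') (γ : G), dist (φ (γ • u')) (γ • φ u') < ε)
    (s' : Quotient (MulAction.orbitRel G P') → P')
    (hs' : ∀ x, Quotient.mk (MulAction.orbitRel G P') (s' x) = x)
    (dbar' : P' → P' → ℝ) (hdbar' : ∀ u v, dbar' u v = ⨅ g : G, dist u (g • v))
    (dbar : P → P → ℝ) (hdbar : ∀ u v, dbar u v = ⨅ g : G, dist u (g • v)) :
    (∀ x y, |dbar' (s' x) (s' y) - dbar (φ (s' x)) (φ (s' y))| < 2 * ε) ∧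
    (∀ v : P, ∃ x, dbar v (φ (s' x)) < 2 * ε) := by
  constructor
  · intro x y
    set u := s' x
    set v := s' y
    rw [hdbar', hdbar]
    obtain ⟨g₀, hg₀⟩ := inf_attained_aux (G := G) u v
    obtain ⟨h₀, hh₀⟩ := inf_attained_aux (G := G) (φ u) (φ v)
    rw [hg₀, hh₀]
    rw [abs_sub_lt_iff]
    constructor
    · -- dist u (g₀ • v) - dist (φ u) (h₀ • φ v) < 2ε
      have h1 : (⨅ g : G, dist u (g • v)) ≤ dist u (h₀ • v) := inf_le_aux u v h₀
      rw [hg₀] at h1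
      have h2 := abs_sub_lt_iff.mp (hφ1 u (h₀ • v))
      have h3 := dist_triangle (φ u) (h₀ • φ v) (φ (h₀ • v))
      have h4 : dist (h₀ • φ v) (φ (h₀ • v)) < ε := by
        rw [dist_comm]; exact hφG v h₀
      linarith [h2.1]
    · -- dist (φ u) (h₀ • φ v) - dist u (g₀ • v) < 2ε
      have h1 : (⨅ g : G, dist (φ u) (g • φ v)) ≤ dist (φ u) (g₀ • φ v) :=
        inf_le_aux (φ u) (φ v) g₀
      rw [hh₀] at h1
      have h2 := abs_sub_lt_iff.mp (hφ1 u (g₀ • v))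
      have h3 := dist_triangle (φ u) (φ (g₀ • v)) (g₀ • φ v)
      have h4 : dist (φ (g₀ • v)) (g₀ • φ v) < ε := hφG v g₀
      linarith [h2.2]
  · intro v
    obtain ⟨u', hu'⟩ := hφ2 v
    refine ⟨Quotient.mk _ u', ?_⟩
    have := hs' (Quotient.mk (MulAction.orbitRel G P') u')
    have hrel : (MulAction.orbitRel G P') (s' (Quotient.mk _ u')) u' := Quotient.eq''.mp this
    obtain ⟨g, hg⟩ : ∃ g : G, g • u' = s' (Quotient.mk (MulAction.orbitRel G P') u') := hrel
    set w := s' (Quotient.mk (MulAction.orbitRel G P') u')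
    rw [hdbar]
    have hle : (⨅ g' : G, dist v (g' • φ w)) ≤ dist v (g⁻¹ • φ w) :=
      inf_le_aux v (φ w) g⁻¹
    have h5 : dist (g⁻¹ • φ w) (φ u') < ε := by
      have : dist (g⁻¹ • φ w) (φ u') = dist (φ w) (g • φ u') := by
        rw [← hiso g (g⁻¹ • φ w) (φ u'), smul_inv_smul]
      rw [this, ← hg]
      exact hφG u' g
    have h6 := dist_triangle v (φ u') (g⁻¹ • φ w)
    rw [dist_comm (φ u') (g⁻¹ • φ w)] at h6
    linarith
end

section
/- In the setting of closed subspaces K_i ⊂ H_i compatible with the convergence structure (Φ_i(𝒞 ∩ K_∞) ⊂ K_i, Φ_i(𝒞 ∩ K_∞^⊥) ⊂ K_i^⊥, and 𝒞 = (𝒞 ∩ K_∞) ⊕ (𝒞 ∩ K_∞^⊥)), for a sequence u_i ∈ K_i: (1) u_i → u_∞ ∈ K_∞ strongly with respect to {Φ_i|_{𝒞∩K_∞}} if and only if u_i → u_∞ strongly with respect to {Φ_i}; (2) the analogous equivalence holds for weak convergence. -/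
open Filter Topology

lemma ks_limsup_of_not_bdd (f : ℕ → ℝ) (h : ¬ IsBoundedUnder (· ≤ ·) atTop f) :
    limsup f atTop = 0 := by
  have : { a : ℝ | ∀ᶠ n in Filter.map f atTop, n ≤ a } = ∅ := by
    ext a
    simp only [Set.mem_setOf_eq, Set.mem_empty_iff_false, iff_false, eventually_map]
    exact fun ha => h ⟨a, ha⟩
  rw [limsup, limsSup, this, Real.sInf_empty]

lemma ks_limsup_sandwich (f g : ℕ → ℝ) (hg0 : ∀ i, 0 ≤ g i) (hgf : ∀ i, g i ≤ f i)
    (hub : ¬ IsBoundedUnder (· ≤ ·) atTop f → ¬ IsBoundedUnder (· ≤ ·) atTop g) :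
    0 ≤ limsup g atTop ∧ limsup g atTop ≤ limsup f atTop := by
  by_cases hf : IsBoundedUnder (· ≤ ·) atTop f
  · obtain ⟨b, hb⟩ := hf
    rw [eventually_map] at hb
    have hgb : IsBoundedUnder (· ≤ ·) atTop g := by
      refine ⟨b, ?_⟩
      rw [eventually_map]
      filter_upwards [hb] with i hi
      exact le_trans (hgf i) hi
    have hgcob : IsCoboundedUnder (· ≤ ·) atTop g :=
      IsBoundedUnder.isCoboundedUnder_le ⟨0, by rw [eventually_map]; exact Eventually.of_forall hg0⟩
    constructor
    · exact le_limsup_of_frequently_le (Frequently.of_forall hg0) hgb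
    · exact limsup_le_limsup (Eventually.of_forall hgf) hgcob ⟨b, by rw [eventually_map]; exact hb⟩
  · rw [ks_limsup_of_not_bdd f hf, ks_limsup_of_not_bdd g (hub hf)]
    exact ⟨le_refl 0, le_refl 0⟩

lemma orthogonalProjection_eq_self_iff {E : Type*} [NormedAddCommGroup E] [InnerProductSpace ℝ E]
    {K : Submodule ℝ E} [K.HasOrthogonalProjection] {v : E} :
    (Submodule.orthogonalProjectionOnto K v : E) = v ↔ v ∈ K :=
  Submodule.starProjection_eq_self_iff

lemma sub_orthogonalProjection_mem_orthogonal {E : Type*} [NormedAddCommGroup E]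
    [InnerProductSpace ℝ E] {K : Submodule ℝ E} [K.HasOrthogonalProjection] (v : E) :
    v - (Submodule.orthogonalProjectionOnto K v : E) ∈ Kᗮ :=
  Submodule.sub_starProjection_mem_orthogonal v

lemma ks_norm_proj_sub_le {E : Type*} [NormedAddCommGroup E] [InnerProductSpace ℝ E]
    (K : Submodule ℝ E) [K.HasOrthogonalProjection] (x y : E) :
    ‖((Submodule.orthogonalProjectionOnto K x : E)) - (Submodule.orthogonalProjectionOnto K y : E)‖ ≤ ‖x - y‖ := by
  have : ((Submodule.orthogonalProjectionOnto K x : E)) - (Submodule.orthogonalProjectionOnto K y : E)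
      = (Submodule.orthogonalProjectionOnto K (x - y) : E) := by
    rw [map_sub]; rfl
  rw [this]
  calc ‖(Submodule.orthogonalProjectionOnto K (x - y) : E)‖ = ‖Submodule.orthogonalProjectionOnto K (x - y)‖ := rfl
    _ ≤ ‖Submodule.orthogonalProjectionOnto K‖ * ‖x - y‖ := (Submodule.orthogonalProjectionOnto K).le_opNorm _
    _ ≤ 1 * ‖x - y‖ := by
        exact mul_le_mul_of_nonneg_right (Submodule.orthogonalProjectionOnto_norm_le K) (norm_nonneg _)
    _ = ‖x - y‖ := one_mul _

lemma ks_proj_add {E : Type*} [NormedAddCommGroup E] [InnerProductSpace ℝ E]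
    (K : Submodule ℝ E) [K.HasOrthogonalProjection] {a b : E} (ha : a ∈ K) (hb : b ∈ Kᗮ) :
    ((Submodule.orthogonalProjectionOnto K (a + b) : E)) = a := by
  rw [map_add]
  push_cast
  rw [orthogonalProjection_eq_self_iff.mpr ha,
    Submodule.orthogonalProjectionOnto_apply_of_mem_orthogonal hb]
  simp

lemma ks_inner_proj {E : Type*} [NormedAddCommGroup E] [InnerProductSpace ℝ E]
    (K : Submodule ℝ E) [K.HasOrthogonalProjection] {a : E} (ha : a ∈ K) (x : E) :
    (inner ℝ a x : ℝ) = inner ℝ a ((Submodule.orthogonalProjectionOnto K x : E)) := by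
  have h := sub_orthogonalProjection_mem_orthogonal (K := K) x
  have h2 := (Submodule.mem_orthogonal K _).mp h a ha
  rw [inner_sub_right] at h2
  linarith

lemma ks_proj_continuous {E : Type*} [NormedAddCommGroup E] [InnerProductSpace ℝ E]
    (K : Submodule ℝ E) [K.HasOrthogonalProjection] :
    Continuous (fun x : E => (Submodule.orthogonalProjectionOnto K x : E)) :=
  continuous_subtype_val.comp (Submodule.orthogonalProjectionOnto K).continuous

/-- Kuwae–Shioya strong convergence with respect to a convergence structure `(ι, Φ)`. -/
def KSStrongConv {CC Hinf : Type*} [AddCommGroup CC] [Module ℝ CC]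
    [NormedAddCommGroup Hinf] [InnerProductSpace ℝ Hinf]
    {H : ℕ → Type*} [∀ i, NormedAddCommGroup (H i)] [∀ i, InnerProductSpace ℝ (H i)]
    (ι : CC →ₗ[ℝ] Hinf) (Φ : ∀ i, CC →ₗ[ℝ] H i)
    (u : ∀ i, H i) (uinf : Hinf) : Prop :=
  ∃ v : ℕ → CC, Tendsto (fun k => ι (v k)) atTop (𝓝 uinf) ∧
    Tendsto (fun k => Filter.limsup (fun i => ‖Φ i (v k) - u i‖) atTop) atTop (𝓝 (0 : ℝ))

/-- Kuwae–Shioya weak convergence. -/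
def KSWeakConv {CC Hinf : Type*} [AddCommGroup CC] [Module ℝ CC]
    [NormedAddCommGroup Hinf] [InnerProductSpace ℝ Hinf]
    {H : ℕ → Type*} [∀ i, NormedAddCommGroup (H i)] [∀ i, InnerProductSpace ℝ (H i)]
    (ι : CC →ₗ[ℝ] Hinf) (Φ : ∀ i, CC →ₗ[ℝ] H i)
    (u : ∀ i, H i) (uinf : Hinf) : Prop :=
  ∀ (v : ∀ i, H i) (vinf : Hinf), KSStrongConv ι Φ v vinf →
    Tendsto (fun i => (inner ℝ (u i) (v i) : ℝ)) atTop (𝓝 (inner ℝ uinf vinf : ℝ))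

/-- In the setting of closed subspaces `K_i ⊂ H_i` compatible with the
convergence structure (`Φ_i(𝒞 ∩ K_∞) ⊂ K_i`, `Φ_i(𝒞 ∩ K_∞^⊥) ⊂ K_i^⊥`,
`𝒞 = (𝒞 ∩ K_∞) ⊕ (𝒞 ∩ K_∞^⊥)`), for a sequence `u_i ∈ K_i` and `u_∞ ∈ K_∞`:
(1) `u_i → u_∞` strongly with respect to the restricted structure `{Φ_i|_{𝒞 ∩ K_∞}}` iff
`u_i → u_∞` strongly with respect to `{Φ_i}`; (2) the analogous equivalence holds for weak
convergence. -/
theorem subspace_convergence_iff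
    {CC Hinf : Type*} [AddCommGroup CC] [Module ℝ CC]
    [NormedAddCommGroup Hinf] [InnerProductSpace ℝ Hinf] [CompleteSpace Hinf]
    {H : ℕ → Type*} [∀ i, NormedAddCommGroup (H i)] [∀ i, InnerProductSpace ℝ (H i)]
    [∀ i, CompleteSpace (H i)]
    (ι : CC →ₗ[ℝ] Hinf) (hdense : Dense (Set.range ι))
    (Φ : ∀ i, CC →ₗ[ℝ] H i)
    (hΦnorm : ∀ c : CC, Tendsto (fun i => ‖Φ i c‖) atTop (𝓝 ‖ι c‖))
    (K : ∀ i, Submodule ℝ (H i)) (Kinf : Submodule ℝ Hinf)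
    [∀ i, CompleteSpace (K i)] [CompleteSpace Kinf]
    (hsplit : ∀ c : CC, ∃ c' c'' : CC, ι c' ∈ Kinf ∧ ι c'' ∈ Kinfᗮ ∧ c = c' + c'')
    (hΦK : ∀ i (c : CC), ι c ∈ Kinf → Φ i c ∈ K i)
    (hΦKperp : ∀ i (c : CC), ι c ∈ Kinfᗮ → Φ i c ∈ (K i)ᗮ)
    (u : ∀ i, H i) (hu : ∀ i, u i ∈ K i) (uinf : Hinf) (huinf : uinf ∈ Kinf) :
    (KSStrongConv (ι.comp (Submodule.comap ι Kinf).subtype)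
        (fun i => (Φ i).comp (Submodule.comap ι Kinf).subtype) u uinf ↔
      KSStrongConv ι Φ u uinf) ∧
    (KSWeakConv (ι.comp (Submodule.comap ι Kinf).subtype)
        (fun i => (Φ i).comp (Submodule.comap ι Kinf).subtype) u uinf ↔
      KSWeakConv ι Φ u uinf) := by
  classical
  choose sp1 sp2 hsp1 hsp2 hspeq using hsplit
  have hι_split : ∀ c : CC, ι c = ι (sp1 c) + ι (sp2 c) := fun c => by
    conv_lhs => rw [hspeq c]
    rw [map_add]
  have hΦ_split : ∀ i (c : CC), Φ i c = Φ i (sp1 c) + Φ i (sp2 c) := fun i c => by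
    conv_lhs => rw [hspeq c]
    rw [map_add]
  have hproj1 : ∀ c : CC, (Submodule.orthogonalProjectionOnto Kinf (ι c) : Hinf) = ι (sp1 c) := fun c => by
    rw [hι_split c]
    exact ks_proj_add Kinf (hsp1 c) (hsp2 c)
  have hprojΦ : ∀ i (c : CC), (Submodule.orthogonalProjectionOnto (K i) (Φ i c) : H i) = Φ i (sp1 c) :=
    fun i c => by
      rw [hΦ_split i c]
      exact ks_proj_add _ (hΦK i _ (hsp1 c)) (hΦKperp i _ (hsp2 c))
  -- reachability of points of `Kinf` by the restricted structure
  have hreach : ∀ x : Hinf, x ∈ Kinf → ∃ d : ℕ → CC, (∀ k, ι (d k) ∈ Kinf) ∧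
      Tendsto (fun k => ι (d k)) atTop (𝓝 x) := by
    intro x hx
    obtain ⟨y, hy1, hy2⟩ := mem_closure_iff_seq_limit.mp (hdense x)
    choose c hc using hy1
    refine ⟨fun n => sp1 (c n), fun n => hsp1 _, ?_⟩
    have ht : Tendsto (fun n => (Submodule.orthogonalProjectionOnto Kinf (ι (c n)) : Hinf)) atTop
        (𝓝 (Submodule.orthogonalProjectionOnto Kinf x : Hinf)) :=
      ((ks_proj_continuous Kinf).tendsto x).comp (by simpa [hc] using hy2)
    simpa [hproj1, orthogonalProjection_eq_self_iff.mpr hx] using ht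
  -- Lifting strong convergence from the restricted structure is trivial.
  have lift_strong : ∀ (v : ∀ i, H i) (vinf : Hinf),
      KSStrongConv (ι.comp (Submodule.comap ι Kinf).subtype)
        (fun i => (Φ i).comp (Submodule.comap ι Kinf).subtype) v vinf →
      KSStrongConv ι Φ v vinf := by
    rintro v vinf ⟨c, hc1, hc2⟩
    exact ⟨fun k => (c k : CC), hc1, hc2⟩
  -- Strong convergence: full implies restricted, for sequences in the subspaces.
  have proj_strong : KSStrongConv ι Φ u uinf →
      KSStrongConv (ι.comp (Submodule.comap ι Kinf).subtype)
        (fun i => (Φ i).comp (Submodule.comap ι Kinf).subtype) u uinf := by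
    rintro ⟨c, hc1, hc2⟩
    refine ⟨fun k => ⟨sp1 (c k), Submodule.mem_comap.mpr (hsp1 _)⟩, ?_, ?_⟩
    · have ht : Tendsto (fun k => (Submodule.orthogonalProjectionOnto Kinf (ι (c k)) : Hinf)) atTop
          (𝓝 (Submodule.orthogonalProjectionOnto Kinf uinf : Hinf)) :=
        ((ks_proj_continuous Kinf).tendsto uinf).comp hc1
      simpa [hproj1, orthogonalProjection_eq_self_iff.mpr huinf] using ht
    · have key : ∀ k, 0 ≤ limsup (fun i => ‖Φ i (sp1 (c k)) - u i‖) atTop ∧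
          limsup (fun i => ‖Φ i (sp1 (c k)) - u i‖) atTop ≤
            limsup (fun i => ‖Φ i (c k) - u i‖) atTop := by
        intro k
        apply ks_limsup_sandwich
        · intro i; exact norm_nonneg _
        · intro i
          have h1 : Φ i (sp1 (c k)) - u i =
              (Submodule.orthogonalProjectionOnto (K i) (Φ i (c k)) : H i) -
                (Submodule.orthogonalProjectionOnto (K i) (u i) : H i) := by
            rw [hprojΦ, orthogonalProjection_eq_self_iff.mpr (hu i)]
          rw [h1]
          exact ks_norm_proj_sub_le _ _ _
        · intro hf hg
          apply hf
          obtain ⟨B, hB⟩ := hg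
          obtain ⟨M, hM⟩ := (hΦnorm (sp2 (c k))).isBoundedUnder_le
          rw [eventually_map] at hB hM
          refine ⟨B + M, ?_⟩
          rw [eventually_map]
          filter_upwards [hB, hM] with i h1 h2
          calc ‖Φ i (c k) - u i‖ = ‖(Φ i (sp1 (c k)) - u i) + Φ i (sp2 (c k))‖ := by
                rw [hΦ_split i (c k), add_sub_right_comm]
            _ ≤ ‖Φ i (sp1 (c k)) - u i‖ + ‖Φ i (sp2 (c k))‖ := norm_add_le _ _
            _ ≤ B + M := add_le_add h1 h2
      exact tendsto_of_tendsto_of_tendsto_of_le_of_le tendsto_const_nhds hc2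
        (fun k => (key k).1) (fun k => (key k).2)
  -- Weak convergence: restricted implies full.
  have wproj : KSWeakConv (ι.comp (Submodule.comap ι Kinf).subtype)
        (fun i => (Φ i).comp (Submodule.comap ι Kinf).subtype) u uinf →
      KSWeakConv ι Φ u uinf := by
    rintro hRW v vinf ⟨c, hc1, hc2⟩
    have hwinfK : (Submodule.orthogonalProjectionOnto Kinf vinf : Hinf) ∈ Kinf :=
      (Submodule.orthogonalProjectionOnto Kinf vinf).2
    have heqinf : (inner ℝ uinf vinf : ℝ) =
        inner ℝ uinf ((Submodule.orthogonalProjectionOnto Kinf vinf : Hinf)) :=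
      ks_inner_proj Kinf huinf vinf
    rw [heqinf]
    by_cases hB : ∃ d : CC, IsBoundedUnder (· ≤ ·) atTop (fun i => ‖Φ i d - v i‖)
    · obtain ⟨d₀, hd₀⟩ := hB
      have heq_i : (fun i => (inner ℝ (u i) (v i) : ℝ)) =
          fun i => (inner ℝ (u i) ((Submodule.orthogonalProjectionOnto (K i) (v i) : H i)) : ℝ) :=
        funext fun i => ks_inner_proj (K i) (hu i) (v i)
      rw [heq_i]
      apply hRW
      refine ⟨fun k => ⟨sp1 (c k), Submodule.mem_comap.mpr (hsp1 _)⟩, ?_, ?_⟩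
      · have ht : Tendsto (fun k => (Submodule.orthogonalProjectionOnto Kinf (ι (c k)) : Hinf)) atTop
            (𝓝 (Submodule.orthogonalProjectionOnto Kinf vinf : Hinf)) :=
          ((ks_proj_continuous Kinf).tendsto vinf).comp hc1
        simpa [hproj1] using ht
      · have key : ∀ k,
            0 ≤ limsup
              (fun i => ‖Φ i (sp1 (c k)) - (Submodule.orthogonalProjectionOnto (K i) (v i) : H i)‖) atTop ∧
            limsup
              (fun i => ‖Φ i (sp1 (c k)) - (Submodule.orthogonalProjectionOnto (K i) (v i) : H i)‖) atTop ≤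
              limsup (fun i => ‖Φ i (c k) - v i‖) atTop := by
          intro k
          apply ks_limsup_sandwich
          · intro i; exact norm_nonneg _
          · intro i
            have h1 : Φ i (sp1 (c k)) - (Submodule.orthogonalProjectionOnto (K i) (v i) : H i) =
                (Submodule.orthogonalProjectionOnto (K i) (Φ i (c k)) : H i) -
                  (Submodule.orthogonalProjectionOnto (K i) (v i) : H i) := by
              rw [hprojΦ]
            rw [h1]
            exact ks_norm_proj_sub_le _ _ _
          · intro hf _
            apply hf
            obtain ⟨B, hB'⟩ := hd₀
            obtain ⟨M, hM⟩ := (hΦnorm (c k - d₀)).isBoundedUnder_le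
            rw [eventually_map] at hB' hM
            refine ⟨M + B, ?_⟩
            rw [eventually_map]
            filter_upwards [hB', hM] with i h1 h2
            calc ‖Φ i (c k) - v i‖
                = ‖(Φ i (c k) - Φ i d₀) + (Φ i d₀ - v i)‖ := by rw [sub_add_sub_cancel]
              _ ≤ ‖Φ i (c k) - Φ i d₀‖ + ‖Φ i d₀ - v i‖ := norm_add_le _ _
              _ = ‖Φ i (c k - d₀)‖ + ‖Φ i d₀ - v i‖ := by rw [map_sub]
              _ ≤ M + B := add_le_add h2 h1
        exact tendsto_of_tendsto_of_tendsto_of_le_of_le tendsto_const_nhds hc2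
          (fun k => (key k).1) (fun k => (key k).2)
    · push_neg at hB
      obtain ⟨d, hdmem, hdtend⟩ := hreach _ hwinfK
      apply hRW
      refine ⟨fun k => ⟨d k, Submodule.mem_comap.mpr (hdmem k)⟩, hdtend, ?_⟩
      have hz : (fun k => limsup (fun i => ‖Φ i (d k) - v i‖) atTop) = fun _ => (0 : ℝ) :=
        funext fun k => ks_limsup_of_not_bdd _ (hB (d k))
      show Tendsto (fun k => limsup (fun i => ‖Φ i (d k) - v i‖) atTop) atTop (𝓝 (0 : ℝ))
      rw [hz]
      exact tendsto_const_nhds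
  refine ⟨⟨lift_strong u uinf, proj_strong⟩, ⟨wproj, ?_⟩⟩
  -- full weak implies restricted weak
  intro hW v vinf hsv
  exact hW v vinf (lift_strong v vinf hsv)
end

section
/- Let (P',d'), (P,d) be metric spaces with isometric actions of a compact group G admitting Borel sections of the quotient maps, φ : P' → P a Borel ε-G-equivariant Hausdorff approximation, ν' a finite Borel measure on P', ν a Borel measure on P, and f : P/G → ℝ a compactly supported continuous function. Then for every ε' > 0 there exists δ > 0 depending only on ε' and f such that if ε ≤ δ then |∫_{P/G} f d(φ̄_* π'_*ν') − ∫_{P/G} f d(π_*ν)| ≤ ν'(P')·ε' + |∫_P (f∘π) d(φ_*ν') − ∫_P (f∘π) dν|, where φ̄ : P'/G → P/G is the induced map φ̄(x) = π(φ(s'(x))) for a Borel section s'. -/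
open MeasureTheory

/-- Let metric spaces `P'`, `P` carry isometric actions of a compact group
`G`, let `φ : P' → P` be a Borel `ε`-`G`-equivariant Hausdorff approximation, `ν'` a finite
Borel measure on `P'`, `ν` a Borel measure on `P`, and `f : P/G → ℝ` compactly supported and
continuous.  Then for every `ε' > 0` there is `δ > 0` depending only on `ε'` and `f` such that
for `ε ≤ δ`,
`|∫ f d(φ̄_* π'_* ν') − ∫ f d(π_* ν)| ≤ ν'(P') ε' + |∫ (f∘π) d(φ_* ν') − ∫ (f∘π) dν|`,
where `φ̄(x) = π(φ(s'(x)))` for a Borel section `s'` of `π' : P' → P'/G`.  (The pushforward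
integrals are written as integrals over `P'` and `P`.) -/
theorem induced_quotient_measure_estimate
    {G P' P : Type*} [Group G] [TopologicalSpace G] [IsTopologicalGroup G] [CompactSpace G]
    [MetricSpace P'] [MetricSpace P]
    [MeasurableSpace P'] [BorelSpace P'] [MeasurableSpace P] [BorelSpace P]
    [MulAction G P'] [MulAction G P] [ContinuousSMul G P'] [ContinuousSMul G P]
    (hiso' : ∀ (g : G) (u v : P'), dist (g • u) (g • v) = dist u v)
    (hiso : ∀ (g : G) (u v : P), dist (g • u) (g • v) = dist u v)
    (f : Quotient (MulAction.orbitRel G P) → ℝ)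
    (hf : Continuous f) (hfsupp : HasCompactSupport f) :
    ∀ ε' : ℝ, 0 < ε' → ∃ δ : ℝ, 0 < δ ∧
      ∀ ε : ℝ, 0 < ε → ε ≤ δ →
      ∀ (φ : P' → P) (s' : Quotient (MulAction.orbitRel G P') → P')
        (ν' : Measure P') (ν : Measure P),
        IsFiniteMeasure ν' →
        Measurable φ →
        (∀ u₀ u₁ : P', |dist u₀ u₁ - dist (φ u₀) (φ u₁)| < ε) →
        (∀ v : P, ∃ u' : P', dist v (φ u') < ε) →
        (∀ (u' : P') (γ : G), dist (φ (γ • u')) (γ • φ u') < ε) →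
        Measurable s' →
        (∀ x, Quotient.mk (MulAction.orbitRel G P') (s' x) = x) →
        |(∫ u', f (Quotient.mk (MulAction.orbitRel G P)
              (φ (s' (Quotient.mk (MulAction.orbitRel G P') u')))) ∂ν') -
            ∫ v, f (Quotient.mk (MulAction.orbitRel G P) v) ∂ν| ≤
          (ν' Set.univ).toReal * ε' +
          |(∫ u', f (Quotient.mk (MulAction.orbitRel G P) (φ u')) ∂ν') -
            ∫ v, f (Quotient.mk (MulAction.orbitRel G P) v) ∂ν| := by
  intro ε' hε'
  set π : P → Quotient (MulAction.orbitRel G P) := Quotient.mk (MulAction.orbitRel G P) with hπdef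
  set g : P → ℝ := fun v => f (π v) with hgdef
  have hπc : Continuous π := continuous_quotient_mk'
  have hgc : Continuous g := hf.comp hπc
  -- the quotient map is proper
  have hproper : IsProperMap π := by
    rw [isProperMap_iff_isClosedMap_and_compact_fibers]
    refine ⟨hπc, MulAction.isClosedMap_quotient (α := G) (β := P), ?_⟩
    intro y
    obtain ⟨p, rfl⟩ := Quotient.exists_rep y
    have hfib : π ⁻¹' {Quotient.mk (MulAction.orbitRel G P) p} = MulAction.orbit G p := by
      ext q
      simp only [Set.mem_preimage, Set.mem_singleton_iff, hπdef]
      rw [Quotient.eq]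
      exact MulAction.orbitRel_apply
    rw [hfib]
    exact isCompact_range (continuous_id.smul continuous_const)
  -- g has compact support
  have hgsupp : HasCompactSupport g := by
    apply HasCompactSupport.intro (hproper.isCompact_preimage hfsupp)
    intro v hv
    show f (π v) = 0
    exact image_eq_zero_of_notMem_tsupport hv
  -- g is uniformly continuous
  have hguc : UniformContinuous g :=
    hgc.uniformContinuous_of_tendsto_cocompact hgsupp.is_zero_at_infty
  rw [Metric.uniformContinuous_iff] at hguc
  obtain ⟨δ, hδ, hδ'⟩ := hguc ε' hε'
  refine ⟨δ, hδ, ?_⟩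
  intro ε hε hεδ φ s' ν' ν hν' hφm happrox hsurj hequiv hs'm hs'
  haveI := hν'
  -- the invariance of g
  have hginv : ∀ (γ : G) (v : P), g (γ • v) = g v := by
    intro γ v
    simp only [hgdef, hπdef]
    congr 1
    exact Quotient.sound (MulAction.orbitRel_apply.mpr (MulAction.mem_orbit v γ))
  set h₁ : P' → ℝ := fun u' =>
    f (Quotient.mk (MulAction.orbitRel G P)
      (φ (s' (Quotient.mk (MulAction.orbitRel G P') u')))) with hh₁
  set h₂ : P' → ℝ := fun u' => f (Quotient.mk (MulAction.orbitRel G P) (φ u')) with hh₂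
  -- pointwise estimate
  have hpt : ∀ u', |h₁ u' - h₂ u'| ≤ ε' := by
    intro u'
    obtain ⟨γ, hγ⟩ : s' (Quotient.mk (MulAction.orbitRel G P') u') ∈ MulAction.orbit G u' := by
      rw [← MulAction.orbitRel_apply]
      exact Quotient.exact (hs' (Quotient.mk (MulAction.orbitRel G P') u'))
    have h1 : h₁ u' = g (φ (γ • u')) := by rw [hh₁]; simp only [hgdef, hπdef, ← hγ]
    have h2 : h₂ u' = g (γ • φ u') := by rw [hh₂, hginv γ (φ u')]
    rw [h1, h2]
    have : dist (g (φ (γ • u'))) (g (γ • φ u')) < ε' :=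
      hδ' (lt_of_lt_of_le (hequiv u' γ) hεδ)
    rw [Real.dist_eq] at this
    exact this.le
  -- boundedness and integrability
  obtain ⟨C, hC⟩ := hgsupp.exists_bound_of_continuous hgc
  have hm1 : Measurable h₁ := by
    have : Measurable fun u' : P' => φ (s' (Quotient.mk (MulAction.orbitRel G P') u')) :=
      hφm.comp (hs'm.comp (measurable_quotient_mk'' (s := MulAction.orbitRel G P')))
    exact (hgc.measurable).comp this
  have hm2 : Measurable h₂ := hgc.measurable.comp hφm
  have hint1 : Integrable h₁ ν' := by
    refine Integrable.mono' (integrable_const C) hm1.aestronglyMeasurable ?_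
    exact Filter.Eventually.of_forall fun u' => hC _
  have hint2 : Integrable h₂ ν' := by
    refine Integrable.mono' (integrable_const C) hm2.aestronglyMeasurable ?_
    exact Filter.Eventually.of_forall fun u' => hC _
  have key : |(∫ u', h₁ u' ∂ν') - ∫ u', h₂ u' ∂ν'| ≤ (ν' Set.univ).toReal * ε' := by
    rw [← integral_sub hint1 hint2]
    have := norm_integral_le_of_norm_le_const (μ := ν')
      (f := fun u' => h₁ u' - h₂ u') (C := ε')
      (Filter.Eventually.of_forall fun u' => by
        rw [Real.norm_eq_abs]; exact hpt u')
    rw [Real.norm_eq_abs, Measure.real] at this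
    linarith [this]
  calc |(∫ u', h₁ u' ∂ν') - ∫ v, f (Quotient.mk (MulAction.orbitRel G P) v) ∂ν|
      ≤ |(∫ u', h₁ u' ∂ν') - ∫ u', h₂ u' ∂ν'| +
        |(∫ u', h₂ u' ∂ν') - ∫ v, f (Quotient.mk (MulAction.orbitRel G P) v) ∂ν| :=
        abs_sub_le _ _ _
    _ ≤ (ν' Set.univ).toReal * ε' +
        |(∫ u', h₂ u' ∂ν') - ∫ v, f (Quotient.mk (MulAction.orbitRel G P) v) ∂ν| := by
        linarith [key]
end
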